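/- Let E ⊆ ∂T have positive p-capacity and suppose E ⊆ ∂T_α for a non-root edge α. Then the p-capacity of E computed in the subtree T_α rooted at α is strictly larger than its p-capacity in T: c_{p,α}(E) > c_p(E). -/

import Mathlib

open scoped ENNReal
open MeasureTheory

/-- A locally finite rooted tree, given by its set of edges. The root edge has no parent,
every other edge has a parent, and every edge has finitely many children. -/
structure RTree where
  E : Type
  root : E
  parent : E → Option E
  parent_root : parent root = none
  parent_isSome : ∀ α, α ≠ root → (parent α).isSome
  level : E → ℕ
  level_root : level root = 0
  level_parent : ∀ α β, parent α = some β → level α = level β + 1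
  locFin : ∀ α, {β | parent β = some α}.Finite

namespace RTree

variable (T : RTree)

/-- `Le T α β` : the edge `α` is an ancestor of (or equal to) the edge `β`,
i.e. `α ≤ β` in the natural partial order on edges. -/
def Le (α β : T.E) : Prop :=
  Relation.ReflTransGen (fun x y => T.parent y = some x) α β

/-- The boundary of `T`: half-infinite geodesics starting at the root edge. -/
structure Boundary where
  seq : ℕ → T.E
  seq_zero : seq 0 = T.root
  seq_parent : ∀ n, T.parent (seq (n + 1)) = some (seq n)

/-- The boundary `∂T_α` of the tent over the edge `α`: boundary points whose
geodesic passes through `α`. -/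
def tentB (α : T.E) : Set T.Boundary := {ζ | ∃ n, ζ.seq n = α}

/-- The standard topology on the boundary, with the tent boundaries as a basis. -/
def ttop : TopologicalSpace T.Boundary :=
  TopologicalSpace.generateFrom {s | ∃ α, s = T.tentB α}

/-- The Borel σ-algebra on the boundary. -/
def tborel : MeasurableSpace T.Boundary := @borel _ T.ttop

/-- The set of edges of the tent `T_α`. -/
def tentE (α : T.E) : Set T.E := {β | T.Le α β}

/-- The relative potential `I_α f (ζ)`, summing `f` over the edges of the geodesic
from the root to `ζ` that lie in the tent `T_α`.  Taking `α` to be the root edge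
gives the potential `If`. -/
noncomputable def relPot (α : T.E) (f : T.E → ℝ≥0∞) (ζ : T.Boundary) : ℝ≥0∞ :=
  ∑' n, Set.indicator (T.tentE α) f (ζ.seq n)

/-- The relative `p`-energy `‖f‖_{ℓ^p(E(T_α))}^p`. -/
noncomputable def relEnergy (p : ℝ) (α : T.E) (f : T.E → ℝ≥0∞) : ℝ≥0∞ :=
  ∑' β, Set.indicator (T.tentE α) (fun γ => f γ ^ p) β

/-- The relative `p`-capacity `c_{p,α}(E)` of `E ⊆ ∂T`, with the tent `T_α`
as ambient tree. -/
noncomputable def relCap (p : ℝ) (α : T.E) (E : Set T.Boundary) : ℝ≥0∞ :=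
  ⨅ f ∈ {f : T.E → ℝ≥0∞ | ∀ ζ ∈ E, 1 ≤ T.relPot α f ζ}, T.relEnergy p α f

/-- The `p`-capacity of a subset of the boundary. -/
noncomputable def cap (p : ℝ) (E : Set T.Boundary) : ℝ≥0∞ := T.relCap p T.root E

end RTree

open RTree

namespace RTree

variable (T : RTree)

lemma level_seq (ζ : T.Boundary) : ∀ n, T.level (ζ.seq n) = n
  | 0 => by rw [ζ.seq_zero, T.level_root]
  | n + 1 => by rw [T.level_parent _ _ (ζ.seq_parent n), level_seq ζ n]

lemma eq_root_of_level_zero (β : T.E) (h : T.level β = 0) : β = T.root := by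
  by_contra hb
  obtain ⟨γ, hγ⟩ := Option.isSome_iff_exists.mp (T.parent_isSome β hb)
  rw [T.level_parent β γ hγ] at h
  omega

lemma level_le_of_Le {α β : T.E} (h : T.Le α β) : T.level α ≤ T.level β := by
  induction h with
  | refl => exact le_refl _
  | tail h1 h2 ih =>
    rw [T.level_parent _ _ h2]
    omega

lemma root_notMem_tent {α : T.E} (hα : α ≠ T.root) : T.root ∉ T.tentE α := by
  intro h
  have h1 := T.level_le_of_Le h
  rw [T.level_root, Nat.le_zero] at h1
  exact hα (T.eq_root_of_level_zero α h1)

lemma le_root (β : T.E) : T.Le T.root β := by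
  have H : ∀ n β, T.level β = n → T.Le T.root β := by
    intro n
    induction n with
    | zero =>
      intro β h
      rw [T.eq_root_of_level_zero β h]
      exact Relation.ReflTransGen.refl
    | succ n ih =>
      intro β h
      by_cases hb : β = T.root
      · rw [hb]
        exact Relation.ReflTransGen.refl
      · obtain ⟨γ, hγ⟩ := Option.isSome_iff_exists.mp (T.parent_isSome β hb)
        have hlv : T.level γ = n := by
          have := T.level_parent β γ hγ; omega
        exact (ih γ hlv).tail hγ
  exact H (T.level β) β rfl

lemma tentE_root : T.tentE T.root = Set.univ := by
  ext β; simp [tentE, T.le_root β]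

lemma relPot_root (f : T.E → ℝ≥0∞) (ζ : T.Boundary) :
    T.relPot T.root f ζ = ∑' n, f (ζ.seq n) := by
  simp [relPot, T.tentE_root]

lemma relEnergy_root (p : ℝ) (f : T.E → ℝ≥0∞) :
    T.relEnergy p T.root f = ∑' β, f β ^ p := by
  simp [relEnergy, T.tentE_root]

lemma capA (p : ℝ) (hp : 1 < p) (α : T.E) (hα : α ≠ T.root) (E : Set T.Boundary)
    (f : T.E → ℝ≥0∞) (hf : ∀ ζ ∈ E, 1 ≤ T.relPot α f ζ)
    (c d : ℝ≥0∞) (hcd : 1 ≤ c + d) :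
    T.cap p E ≤ c ^ p + d ^ p * T.relEnergy p α f := by
  classical
  have hp0 : (0:ℝ) < p := by linarith
  have hroot : T.root ∉ T.tentE α := T.root_notMem_tent hα
  set f' : T.E → ℝ≥0∞ :=
    fun β => if β = T.root then c else d * Set.indicator (T.tentE α) f β with hf'
  have key : ∀ ζ : T.Boundary,
      T.relPot T.root f' ζ = c + d * T.relPot α f ζ := by
    intro ζ
    rw [T.relPot_root]
    have hterm : ∀ n, f' (ζ.seq n) =
        (if n = 0 then c else 0) + d * Set.indicator (T.tentE α) f (ζ.seq n) := by
      intro n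
      cases n with
      | zero =>
        simp [hf', ζ.seq_zero, Set.indicator_of_notMem hroot]
      | succ n =>
        have hne : ζ.seq (n + 1) ≠ T.root := by
          intro h
          have h2 := T.level_seq ζ (n + 1)
          rw [h, T.level_root] at h2
          omega
        simp [hf', hne]
    calc ∑' n, f' (ζ.seq n)
        = ∑' n, ((if n = 0 then c else 0) + d * Set.indicator (T.tentE α) f (ζ.seq n)) :=
          tsum_congr hterm
      _ = (∑' n, (if n = 0 then c else 0)) +
            ∑' n, d * Set.indicator (T.tentE α) f (ζ.seq n) := ENNReal.tsum_add
      _ = c + d * T.relPot α f ζ := by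
          rw [ENNReal.tsum_mul_left, tsum_ite_eq]
          rfl
  have adm : f' ∈ {g : T.E → ℝ≥0∞ | ∀ ζ ∈ E, 1 ≤ T.relPot T.root g ζ} := by
    intro ζ hζ
    rw [key ζ]
    calc (1:ℝ≥0∞) ≤ c + d := hcd
      _ = c + d * 1 := by rw [mul_one]
      _ ≤ c + d * T.relPot α f ζ := add_le_add_right (mul_le_mul_right (hf ζ hζ) d) c
  have energy : T.relEnergy p T.root f' = c ^ p + d ^ p * T.relEnergy p α f := by
    rw [T.relEnergy_root]
    have hterm : ∀ β, f' β ^ p =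
        (if β = T.root then c ^ p else 0) +
          d ^ p * Set.indicator (T.tentE α) (fun γ => f γ ^ p) β := by
      intro β
      by_cases hb : β = T.root
      · subst hb
        simp [hf', Set.indicator_of_notMem hroot]
      · simp only [hf', if_neg hb]
        by_cases htent : β ∈ T.tentE α
        · rw [Set.indicator_of_mem htent, Set.indicator_of_mem htent,
            ENNReal.mul_rpow_of_nonneg _ _ (le_of_lt hp0), zero_add]
        · rw [Set.indicator_of_notMem htent, Set.indicator_of_notMem htent,
            mul_zero, mul_zero, zero_add, ENNReal.zero_rpow_of_pos hp0]
    calc ∑' β, f' β ^ p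
        = ∑' β, ((if β = T.root then c ^ p else 0) +
            d ^ p * Set.indicator (T.tentE α) (fun γ => f γ ^ p) β) := tsum_congr hterm
      _ = (∑' β, (if β = T.root then c ^ p else 0)) +
            ∑' β, d ^ p * Set.indicator (T.tentE α) (fun γ => f γ ^ p) β := ENNReal.tsum_add
      _ = c ^ p + d ^ p * T.relEnergy p α f := by
          rw [ENNReal.tsum_mul_left, tsum_ite_eq]
          rfl
  calc T.cap p E ≤ T.relEnergy p T.root f' := iInf₂_le f' adm
    _ = c ^ p + d ^ p * T.relEnergy p α f := energy

end RTree


/-- If `E ⊆ ∂T_α` has positive `p`-capacity and `α` is a non-root edge, then the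
`p`-capacity of `E` computed in the tent `T_α` (rooted at `α`) is strictly larger
than its `p`-capacity in `T`: `c_p(E) < c_{p,α}(E)`. -/
theorem stmt13 (T : RTree) (p : ℝ) (hp : 1 < p) (α : T.E) (hα : α ≠ T.root)
    (E : Set T.Boundary) (hE : E ⊆ T.tentB α) (hpos : 0 < T.cap p E) :
    T.cap p E < T.relCap p α E := by
  classical
  have hp0 : (0:ℝ) < p := by linarith
  -- cap ≤ relCap
  have hle : T.cap p E ≤ T.relCap p α E := by
    refine le_iInf₂ fun f hf => ?_
    have h := T.capA p hp α hα E f hf 0 1 (by simp)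
    simpa [ENNReal.zero_rpow_of_pos hp0] using h
  set M := T.relCap p α E with hM
  rcases eq_or_ne M ∞ with hMtop | hMfin
  · -- cap ≤ 1 < ∞ = M
    have hcap1 : T.cap p E ≤ 1 := by
      set f₀ : T.E → ℝ≥0∞ := fun β => if β = T.root then 1 else 0 with hf₀
      have adm : f₀ ∈ {g : T.E → ℝ≥0∞ | ∀ ζ ∈ E, 1 ≤ T.relPot T.root g ζ} := by
        intro ζ hζ
        rw [T.relPot_root]
        have h0 : f₀ (ζ.seq 0) = 1 := by simp [hf₀, ζ.seq_zero]
        calc (1:ℝ≥0∞) = f₀ (ζ.seq 0) := h0.symm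
          _ ≤ ∑' n, f₀ (ζ.seq n) := ENNReal.le_tsum 0
      have energy : T.relEnergy p T.root f₀ = 1 := by
        rw [T.relEnergy_root]
        have hterm : ∀ β, f₀ β ^ p = (if β = T.root then 1 else 0) := by
          intro β
          by_cases hb : β = T.root <;>
            simp [hf₀, hb, ENNReal.zero_rpow_of_pos hp0]
        rw [tsum_congr hterm, tsum_ite_eq]
      calc T.cap p E ≤ T.relEnergy p T.root f₀ := iInf₂_le f₀ adm
        _ = 1 := energy
    rw [hMtop]
    exact lt_of_le_of_lt hcap1 ENNReal.one_lt_top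
  · have hMpos : 0 < M := lt_of_lt_of_le hpos hle
    set m := M.toReal with hm
    have hm0 : 0 < m := ENNReal.toReal_pos hMpos.ne' hMfin
    -- choose t
    obtain ⟨t, ht0, ht1, htm⟩ : ∃ t : ℝ, 0 < t ∧ t < 1 ∧ t ^ (p - 1) < m := by
      refine ⟨min (1/2) (m ^ (1/(p-1)) / 2), ?_, ?_, ?_⟩
      · have : (0:ℝ) < m ^ (1/(p-1)) := Real.rpow_pos_of_pos hm0 _
        positivity
      · calc min (1/2) (m ^ (1/(p-1)) / 2) ≤ 1/2 := min_le_left _ _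
          _ < 1 := by norm_num
      · have hp1 : (0:ℝ) < p - 1 := by linarith
        have hpos' : (0:ℝ) < m ^ (1/(p-1)) := Real.rpow_pos_of_pos hm0 _
        have hlt : min (1/2) (m ^ (1/(p-1)) / 2) < m ^ (1/(p-1)) := by
          calc min (1/2) (m ^ (1/(p-1)) / 2) ≤ m ^ (1/(p-1)) / 2 := min_le_right _ _
            _ < m ^ (1/(p-1)) := by linarith
        have hnn : (0:ℝ) ≤ min (1/2) (m ^ (1/(p-1)) / 2) := by
          have : (0:ℝ) < m ^ (1/(p-1)) := hpos'
          positivity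
        calc min (1/2) (m ^ (1/(p-1)) / 2) ^ (p-1)
            < (m ^ (1/(p-1))) ^ (p-1) := Real.rpow_lt_rpow hnn hlt hp1
          _ = m := by
              rw [← Real.rpow_mul (le_of_lt hm0), one_div,
                inv_mul_cancel₀ (ne_of_gt hp1), Real.rpow_one]
    have h1t0 : (0:ℝ) < 1 - t := by linarith
    -- key strict real facts
    have hq : (1 - t) ^ p ≤ 1 - t := by
      calc (1 - t) ^ p ≤ (1 - t) ^ (1:ℝ) :=
            Real.rpow_le_rpow_of_exponent_ge h1t0 (by linarith) (by linarith)
        _ = 1 - t := Real.rpow_one _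
    have htp : t ^ p < t * m := by
      calc t ^ p = t ^ (1 + (p - 1)) := by ring_nf
        _ = t ^ (1:ℝ) * t ^ (p - 1) := Real.rpow_add ht0 _ _
        _ = t * t ^ (p - 1) := by rw [Real.rpow_one]
        _ < t * m := by
            exact mul_lt_mul_of_pos_left htm ht0
    have hqpos : (0:ℝ) < (1 - t) ^ p := Real.rpow_pos_of_pos h1t0 _
    -- gap
    set g : ℝ := (1 - (1 - t) ^ p) * m - t ^ p with hg
    have hgpos : 0 < g := by
      have h1 : t * m ≤ (1 - (1 - t) ^ p) * m := by
        have : t ≤ 1 - (1 - t) ^ p := by linarith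
        exact mul_le_mul_of_nonneg_right this (le_of_lt hm0)
      have := lt_of_lt_of_le htp h1
      simp only [hg]; linarith
    set ε : ℝ := g / (2 * (1 - t) ^ p) with hε
    have hεpos : 0 < ε := by positivity
    have hreal : t ^ p + (1 - t) ^ p * (m + ε) < m := by
      have h2 : (1 - t) ^ p * ε = g / 2 := by
        rw [hε]; field_simp
      have h3 : t ^ p + (1 - t) ^ p * m = m - g := by rw [hg]; ring
      have : t ^ p + (1 - t) ^ p * (m + ε)
          = (t ^ p + (1 - t) ^ p * m) + (1 - t) ^ p * ε := by ring
      rw [this, h2, h3]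
      linarith
    -- select f with small energy
    have hlt' : M < ENNReal.ofReal (m + ε) := by
      rw [← ENNReal.ofReal_toReal hMfin, ← hm]
      exact (ENNReal.ofReal_lt_ofReal_iff (by linarith)).mpr (by linarith)
    obtain ⟨f, hfmem, hfE⟩ :
        ∃ f ∈ {g : T.E → ℝ≥0∞ | ∀ ζ ∈ E, 1 ≤ T.relPot α g ζ},
          T.relEnergy p α f < ENNReal.ofReal (m + ε) := by
      have : ⨅ f ∈ {g : T.E → ℝ≥0∞ | ∀ ζ ∈ E, 1 ≤ T.relPot α g ζ}, T.relEnergy p α f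
          < ENNReal.ofReal (m + ε) := hlt'
      simp only [iInf_lt_iff] at this
      obtain ⟨f, hf1, hf2⟩ := this
      exact ⟨f, hf1, hf2⟩
    -- apply capA
    have hcd : (1:ℝ≥0∞) ≤ ENNReal.ofReal t + ENNReal.ofReal (1 - t) := by
      rw [← ENNReal.ofReal_add (le_of_lt ht0) (le_of_lt h1t0)]
      simp
    have hcap := T.capA p hp α hα E f hfmem (ENNReal.ofReal t) (ENNReal.ofReal (1 - t)) hcd
    have hfinal : ENNReal.ofReal t ^ p
        + ENNReal.ofReal (1 - t) ^ p * T.relEnergy p α f < M := by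
      calc ENNReal.ofReal t ^ p + ENNReal.ofReal (1 - t) ^ p * T.relEnergy p α f
          ≤ ENNReal.ofReal t ^ p + ENNReal.ofReal (1 - t) ^ p * ENNReal.ofReal (m + ε) :=
            add_le_add_right (mul_le_mul_right (le_of_lt hfE) _) _
        _ = ENNReal.ofReal (t ^ p + (1 - t) ^ p * (m + ε)) := by
            rw [ENNReal.ofReal_rpow_of_pos ht0, ENNReal.ofReal_rpow_of_pos h1t0,
              ← ENNReal.ofReal_mul (by positivity),
              ← ENNReal.ofReal_add (by positivity) (by positivity)]
        _ < ENNReal.ofReal m := (ENNReal.ofReal_lt_ofReal_iff hm0).mpr hreal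
        _ = M := by rw [hm, ENNReal.ofReal_toReal hMfin]
    exact lt_of_le_of_lt hcap hfinal
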